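/- Let I, J ≥ 1 be integers, let μ ∈ ℝ^I and β ∈ ℝ^J be probability vectors with all entries strictly positive, let C ∈ ℝ^{I×J}, and let ε > 0, η > ε. Define F(a,b) = Σ_i μ_i a_i − ε Σ_{i,j} μ_i β_j exp((a_i + b_j − C_{ij})/ε) − (η−ε) log(Σ_j β_j exp(−b_j/(η−ε))) for (a,b) ∈ ℝ^I × ℝ^J. Then the set of maximizers of F is an affine line spanned by the direction ((1,…,1),(−1,…,−1)): (i) if (a,b) maximizes F then for every c ∈ ℝ the point (a_1+c,…,a_I+c, b_1−c,…,b_J−c) also maximizes F; and (ii) if (a,b) and (a',b') both maximize F, then there exists c ∈ ℝ such that a'_i = a_i + c for all i and b'_j = b_j − c for all j. -/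

import Mathlib

open Real BigOperators Finset

/-- The dual objective of the regularized Wasserstein estimator problem. -/
noncomputable def Fobj {I J : ℕ} (μ : Fin I → ℝ) (β : Fin J → ℝ)
    (C : Fin I → Fin J → ℝ) (ε η : ℝ) (a : Fin I → ℝ) (b : Fin J → ℝ) : ℝ :=
  ∑ i, μ i * a i - ε * ∑ i, ∑ j, μ i * β j * Real.exp ((a i + b j - C i j) / ε)
    - (η - ε) * Real.log (∑ j, β j * Real.exp (-b j / (η - ε)))

/-- Midpoint convexity of `exp`, weak form. -/
lemma exp_mid_le (x y : ℝ) : Real.exp ((x + y) / 2) ≤ (Real.exp x + Real.exp y) / 2 := by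
  have hx : Real.exp x = Real.exp (x/2) * Real.exp (x/2) := by
    rw [← Real.exp_add]; ring_nf
  have hy : Real.exp y = Real.exp (y/2) * Real.exp (y/2) := by
    rw [← Real.exp_add]; ring_nf
  have hxy : Real.exp ((x + y)/2) = Real.exp (x/2) * Real.exp (y/2) := by
    rw [← Real.exp_add]; ring_nf
  nlinarith [sq_nonneg (Real.exp (x/2) - Real.exp (y/2))]

/-- Midpoint convexity of `exp`, strict form. -/
lemma exp_mid_lt (x y : ℝ) (h : x ≠ y) :
    Real.exp ((x + y) / 2) < (Real.exp x + Real.exp y) / 2 := by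
  have hx : Real.exp x = Real.exp (x/2) * Real.exp (x/2) := by
    rw [← Real.exp_add]; ring_nf
  have hy : Real.exp y = Real.exp (y/2) * Real.exp (y/2) := by
    rw [← Real.exp_add]; ring_nf
  have hxy : Real.exp ((x + y)/2) = Real.exp (x/2) * Real.exp (y/2) := by
    rw [← Real.exp_add]; ring_nf
  have hne : Real.exp (x/2) ≠ Real.exp (y/2) := by
    intro hc
    exact h (by have := Real.exp_injective hc; linarith)
  have hpos : 0 < (Real.exp (x/2) - Real.exp (y/2))^2 :=
    sq_pos_of_ne_zero (sub_ne_zero.mpr hne)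
  nlinarith [hpos]

/-- Invariance of the dual objective under the diagonal translation. -/
lemma Fobj_shift {I J : ℕ} (hJ : 1 ≤ J) (μ : Fin I → ℝ) (hμsum : ∑ i, μ i = 1)
    (β : Fin J → ℝ) (hβpos : ∀ j, 0 < β j)
    (C : Fin I → Fin J → ℝ) (ε η : ℝ) (hε : 0 < ε) (hεη : ε < η)
    (a : Fin I → ℝ) (b : Fin J → ℝ) (c : ℝ) :
    Fobj μ β C ε η (fun i => a i + c) (fun j => b j - c) = Fobj μ β C ε η a b := by
  have ht : (0:ℝ) < η - ε := by linarith
  have hJne : (Finset.univ : Finset (Fin J)).Nonempty := by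
    haveI : NeZero J := ⟨by omega⟩
    exact Finset.univ_nonempty
  unfold Fobj
  have h1 : ∑ i, μ i * (a i + c) = ∑ i, μ i * a i + c := by
    calc ∑ i, μ i * (a i + c) = ∑ i, (μ i * a i + μ i * c) := by
          exact Finset.sum_congr rfl fun i _ => by ring
      _ = ∑ i, μ i * a i + (∑ i, μ i) * c := by
          rw [Finset.sum_add_distrib, Finset.sum_mul]
      _ = ∑ i, μ i * a i + c := by rw [hμsum]; ring
  have h2 : ∀ i j, a i + c + (b j - c) - C i j = a i + b j - C i j := fun i j => by ring
  have hS : (0:ℝ) < ∑ j, β j * Real.exp (-b j / (η - ε)) :=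
    Finset.sum_pos (fun j _ => mul_pos (hβpos j) (Real.exp_pos _)) hJne
  have h3 : ∑ j, β j * Real.exp (-(b j - c) / (η - ε))
      = (∑ j, β j * Real.exp (-b j / (η - ε))) * Real.exp (c / (η - ε)) := by
    rw [Finset.sum_mul]
    refine Finset.sum_congr rfl fun j _ => ?_
    rw [mul_assoc, ← Real.exp_add]
    congr 1
    field_simp
    ring
  simp only [h2, h1, h3]
  rw [Real.log_mul (ne_of_gt hS) (ne_of_gt (Real.exp_pos _)), Real.log_exp]
  field_simp
  ring

/-- The set of maximizers of the dual objective `F` is an affine line in the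
direction `((1,…,1),(−1,…,−1))`: it is stable under the translations
`(a, b) ↦ (a + c𝟙, b − c𝟙)`, and any two maximizers differ by such a translation. -/
theorem dual_maximizers_affine_line (I J : ℕ) (hI : 1 ≤ I) (hJ : 1 ≤ J)
    (μ : Fin I → ℝ) (hμpos : ∀ i, 0 < μ i) (hμsum : ∑ i, μ i = 1)
    (β : Fin J → ℝ) (hβpos : ∀ j, 0 < β j) (hβsum : ∑ j, β j = 1)
    (C : Fin I → Fin J → ℝ) (ε η : ℝ) (hε : 0 < ε) (hεη : ε < η) :
    (∀ (a : Fin I → ℝ) (b : Fin J → ℝ),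
      (∀ (a' : Fin I → ℝ) (b' : Fin J → ℝ), Fobj μ β C ε η a' b' ≤ Fobj μ β C ε η a b) →
      ∀ c : ℝ,
        ∀ (a' : Fin I → ℝ) (b' : Fin J → ℝ),
          Fobj μ β C ε η a' b' ≤ Fobj μ β C ε η (fun i => a i + c) (fun j => b j - c)) ∧
    (∀ (a : Fin I → ℝ) (b : Fin J → ℝ) (a' : Fin I → ℝ) (b' : Fin J → ℝ),
      (∀ (a'' : Fin I → ℝ) (b'' : Fin J → ℝ), Fobj μ β C ε η a'' b'' ≤ Fobj μ β C ε η a b) →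
      (∀ (a'' : Fin I → ℝ) (b'' : Fin J → ℝ), Fobj μ β C ε η a'' b'' ≤ Fobj μ β C ε η a' b') →
      ∃ c : ℝ, (∀ i, a' i = a i + c) ∧ (∀ j, b' j = b j - c)) := by
  have ht : (0:ℝ) < η - ε := by linarith
  have hJne : (Finset.univ : Finset (Fin J)).Nonempty := by
    haveI : NeZero J := ⟨by omega⟩
    exact Finset.univ_nonempty
  constructor
  · intro a b hmax c a' b'
    rw [Fobj_shift hJ μ hμsum β hβpos C ε η hε hεη a b c]
    exact hmax a' b'
  · intro a b a' b' hmax hmax'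
    -- the two optimal values coincide
    have heq : Fobj μ β C ε η a' b' = Fobj μ β C ε η a b :=
      le_antisymm (hmax a' b') (hmax' a b)
    -- key claim
    have key : ∀ i j, a i + b j = a' i + b' j := by
      by_contra hcon
      push_neg at hcon
      obtain ⟨i0, j0, hij⟩ := hcon
      set am : Fin I → ℝ := fun i => (a i + a' i) / 2 with ham
      set bm : Fin J → ℝ := fun j => (b j + b' j) / 2 with hbm
      -- linear term
      have hlin : ∑ i, μ i * am i = ((∑ i, μ i * a i) + ∑ i, μ i * a' i) / 2 := by
        rw [← Finset.sum_add_distrib, Finset.sum_div]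
        exact Finset.sum_congr rfl fun i _ => by simp only [ham]; ring
      -- exponential term, strict
      have hexpterm : ∀ i j, μ i * β j * Real.exp ((am i + bm j - C i j) / ε)
          ≤ (μ i * β j * Real.exp ((a i + b j - C i j) / ε)
            + μ i * β j * Real.exp ((a' i + b' j - C i j) / ε)) / 2 := by
        intro i j
        have harg : (am i + bm j - C i j) / ε
            = ((a i + b j - C i j) / ε + (a' i + b' j - C i j) / ε) / 2 := by
          simp only [ham, hbm]; field_simp; ring
        rw [harg]
        have := exp_mid_le ((a i + b j - C i j) / ε) ((a' i + b' j - C i j) / ε)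
        have hc : 0 ≤ μ i * β j := le_of_lt (mul_pos (hμpos i) (hβpos j))
        nlinarith [this, hc]
      have hexpstrict : μ i0 * β j0 * Real.exp ((am i0 + bm j0 - C i0 j0) / ε)
          < (μ i0 * β j0 * Real.exp ((a i0 + b j0 - C i0 j0) / ε)
            + μ i0 * β j0 * Real.exp ((a' i0 + b' j0 - C i0 j0) / ε)) / 2 := by
        have harg : (am i0 + bm j0 - C i0 j0) / ε
            = ((a i0 + b j0 - C i0 j0) / ε + (a' i0 + b' j0 - C i0 j0) / ε) / 2 := by
          simp only [ham, hbm]; field_simp; ring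
        rw [harg]
        have hne : (a i0 + b j0 - C i0 j0) / ε ≠ (a' i0 + b' j0 - C i0 j0) / ε := by
          intro hc
          apply hij
          rw [div_eq_div_iff (ne_of_gt hε) (ne_of_gt hε)] at hc
          have h := mul_right_cancel₀ (ne_of_gt hε) hc
          linarith
        have := exp_mid_lt _ _ hne
        have hc : 0 < μ i0 * β j0 := mul_pos (hμpos i0) (hβpos j0)
        nlinarith [this, hc]
      have hexp : ∑ i, ∑ j, μ i * β j * Real.exp ((am i + bm j - C i j) / ε)
          < ((∑ i, ∑ j, μ i * β j * Real.exp ((a i + b j - C i j) / ε))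
            + ∑ i, ∑ j, μ i * β j * Real.exp ((a' i + b' j - C i j) / ε)) / 2 := by
        rw [← Finset.sum_add_distrib, Finset.sum_div]
        refine Finset.sum_lt_sum (fun i _ => ?_) ⟨i0, Finset.mem_univ i0, ?_⟩
        · rw [← Finset.sum_add_distrib, Finset.sum_div]
          exact Finset.sum_le_sum fun j _ => hexpterm i j
        · rw [← Finset.sum_add_distrib, Finset.sum_div]
          refine Finset.sum_lt_sum (fun j _ => hexpterm i0 j)
            ⟨j0, Finset.mem_univ j0, hexpstrict⟩
      -- log term (Cauchy–Schwarz)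
      have hSx : (0:ℝ) < ∑ j, β j * Real.exp (-b j / (η - ε)) :=
        Finset.sum_pos (fun j _ => mul_pos (hβpos j) (Real.exp_pos _)) hJne
      have hSy : (0:ℝ) < ∑ j, β j * Real.exp (-b' j / (η - ε)) :=
        Finset.sum_pos (fun j _ => mul_pos (hβpos j) (Real.exp_pos _)) hJne
      have hSm : (0:ℝ) < ∑ j, β j * Real.exp (-bm j / (η - ε)) :=
        Finset.sum_pos (fun j _ => mul_pos (hβpos j) (Real.exp_pos _)) hJne
      have hCS : (∑ j, β j * Real.exp (-bm j / (η - ε))) ^ 2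
          ≤ (∑ j, β j * Real.exp (-b j / (η - ε)))
            * ∑ j, β j * Real.exp (-b' j / (η - ε)) := by
        have h := Finset.sum_mul_sq_le_sq_mul_sq Finset.univ
          (fun j => Real.sqrt (β j) * Real.exp (-b j / (2 * (η - ε))))
          (fun j => Real.sqrt (β j) * Real.exp (-b' j / (2 * (η - ε))))
        have e1 : ∀ j : Fin J,
            (Real.sqrt (β j) * Real.exp (-b j / (2 * (η - ε))))
            * (Real.sqrt (β j) * Real.exp (-b' j / (2 * (η - ε))))
            = β j * Real.exp (-bm j / (η - ε)) := by
          intro j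
          have : Real.sqrt (β j) * Real.sqrt (β j) = β j :=
            Real.mul_self_sqrt (le_of_lt (hβpos j))
          rw [show (Real.sqrt (β j) * Real.exp (-b j / (2 * (η - ε))))
            * (Real.sqrt (β j) * Real.exp (-b' j / (2 * (η - ε))))
            = (Real.sqrt (β j) * Real.sqrt (β j))
              * (Real.exp (-b j / (2 * (η - ε))) * Real.exp (-b' j / (2 * (η - ε)))) by ring,
            this, ← Real.exp_add]
          congr 2
          simp only [hbm]
          field_simp
          ring
        have e2 : ∀ (f : Fin J → ℝ), ∀ j : Fin J,
            (Real.sqrt (β j) * Real.exp (f j / (2 * (η - ε)))) ^ 2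
            = β j * Real.exp (f j / (η - ε)) := by
          intro f j
          rw [mul_pow, Real.sq_sqrt (le_of_lt (hβpos j)), ← Real.exp_nat_mul]
          congr 2
          field_simp
          ring
        calc (∑ j, β j * Real.exp (-bm j / (η - ε))) ^ 2
            = (∑ j, (Real.sqrt (β j) * Real.exp (-b j / (2 * (η - ε))))
              * (Real.sqrt (β j) * Real.exp (-b' j / (2 * (η - ε))))) ^ 2 := by
              congr 1; exact Finset.sum_congr rfl fun j _ => (e1 j).symm
          _ ≤ (∑ j, (Real.sqrt (β j) * Real.exp (-b j / (2 * (η - ε)))) ^ 2)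
              * ∑ j, (Real.sqrt (β j) * Real.exp (-b' j / (2 * (η - ε)))) ^ 2 := h
          _ = _ := by
              congr 1
              · exact Finset.sum_congr rfl fun j _ => e2 (fun j => -b j) j
              · exact Finset.sum_congr rfl fun j _ => e2 (fun j => -b' j) j
      have hlog : Real.log (∑ j, β j * Real.exp (-bm j / (η - ε)))
          ≤ (Real.log (∑ j, β j * Real.exp (-b j / (η - ε)))
            + Real.log (∑ j, β j * Real.exp (-b' j / (η - ε)))) / 2 := by
        have h2 : Real.log ((∑ j, β j * Real.exp (-bm j / (η - ε))) ^ 2)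
            ≤ Real.log ((∑ j, β j * Real.exp (-b j / (η - ε)))
              * ∑ j, β j * Real.exp (-b' j / (η - ε))) :=
          Real.log_le_log (by positivity) hCS
        rw [Real.log_pow, Real.log_mul (ne_of_gt hSx) (ne_of_gt hSy)] at h2
        push_cast at h2
        linarith
      -- combine
      have hFm : Fobj μ β C ε η a b < Fobj μ β C ε η am bm := by
        have h1 : Fobj μ β C ε η am bm
            > (Fobj μ β C ε η a b + Fobj μ β C ε η a' b') / 2 := by
          unfold Fobj
          rw [hlin]
          have hε' : ε * (∑ i, ∑ j, μ i * β j * Real.exp ((am i + bm j - C i j) / ε))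
              < ε * (((∑ i, ∑ j, μ i * β j * Real.exp ((a i + b j - C i j) / ε))
                + ∑ i, ∑ j, μ i * β j * Real.exp ((a' i + b' j - C i j) / ε)) / 2) :=
            (mul_lt_mul_iff_right₀ hε).mpr hexp
          have ht' : (η - ε) * Real.log (∑ j, β j * Real.exp (-bm j / (η - ε)))
              ≤ (η - ε) * ((Real.log (∑ j, β j * Real.exp (-b j / (η - ε)))
                + Real.log (∑ j, β j * Real.exp (-b' j / (η - ε)))) / 2) :=
            (mul_le_mul_iff_right₀ ht).mpr hlog
          linarith
        rw [heq] at h1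
        linarith
      exact absurd (hmax am bm) (not_le.mpr hFm)
    -- extract c
    haveI : NeZero I := ⟨by omega⟩
    haveI : NeZero J := ⟨by omega⟩
    refine ⟨b 0 - b' 0, fun i => ?_, fun j => ?_⟩
    · have := key i 0; linarith
    · have h1 := key 0 j
      have h2 := key 0 0
      linarith
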